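/- The parking function cosum enumerator satisfies the Kreweras recurrence: P_0(q) = 1 and, for n ≥ 1, P_n(q) = Σ_{i=0}^{n-1} C(n-1,i) (1 + q + ... + q^i) P_i(q) P_{n-1-i}(q), where P_n(q) = Σ_{π ∈ PF(n)} q^{cosum(π)}. -/

import Mathlib

open Finset Polynomial

/-- `IsPF n π` : `π` is a parking function of length `n`, i.e. a sequence of
positive integers whose weakly increasing rearrangement `b₁ ≤ ⋯ ≤ bₙ`
satisfies `b_j ≤ j` for all `1 ≤ j ≤ n`. -/
def IsPF (n : ℕ) (π : Fin n → ℕ) : Prop :=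
  (∀ i, 1 ≤ π i) ∧ ∃ σ : Equiv.Perm (Fin n),
    (Monotone fun j => π (σ j)) ∧ ∀ j : Fin n, π (σ j) ≤ j.val + 1

/-- The cosum of a parking function: `C(n+1,2) - Σ_i π_i`. -/
noncomputable def cosum (n : ℕ) (π : Fin n → ℕ) : ℕ :=
  Nat.choose (n+1) 2 - ∑ i, π i

/-- The parking function cosum enumerator `P_n(q) = Σ_{π ∈ PF(n)} q^{cosum π}`. -/
noncomputable def pfCosumEnum (n : ℕ) : Polynomial ℤ :=
  ∑ᶠ π ∈ {π : Fin n → ℕ | IsPF n π}, X ^ cosum n π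



/-- number of coordinates with value ≤ s -/
def cnt {n : ℕ} (π : Fin n → ℕ) (s : ℕ) : ℕ :=
  (Finset.univ.filter fun j => π j ≤ s).card

lemma card_filter_val_lt {n s : ℕ} (hs : s ≤ n) :
    ((Finset.univ : Finset (Fin n)).filter fun j => j.val < s).card = s := by
  rw [← Finset.card_range s]
  apply Finset.card_bij (fun j _ => j.val)
  · intro a ha; simp at ha ⊢; exact ha
  · intro a ha b hb h; exact Fin.val_injective h
  · intro b hb; simp at hb
    exact ⟨⟨b, lt_of_lt_of_le hb hs⟩, by simpa using hb, rfl⟩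

lemma cnt_comp_perm {n : ℕ} (π : Fin n → ℕ) (σ : Equiv.Perm (Fin n)) (s : ℕ) :
    cnt (fun j => π (σ j)) s = cnt π s := by
  unfold cnt
  apply Finset.card_bij (fun j _ => σ j)
  · intro a ha; simpa using (Finset.mem_filter.mp ha).2
  · intro a _ b _ h; exact σ.injective h
  · intro b hb; exact ⟨σ.symm b, by simpa using (Finset.mem_filter.mp hb).2, by simp⟩

lemma cnt_mono {n : ℕ} (π : Fin n → ℕ) {s t : ℕ} (h : s ≤ t) : cnt π s ≤ cnt π t := by
  apply Finset.card_le_card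
  intro j hj
  simp only [Finset.mem_filter, Finset.mem_univ, true_and] at hj ⊢
  omega

lemma cnt_le {n : ℕ} (π : Fin n → ℕ) (s : ℕ) : cnt π s ≤ n := by
  simpa [cnt] using Finset.card_filter_le (Finset.univ : Finset (Fin n)) (fun j => π j ≤ s)

lemma isPF_iff {n : ℕ} (π : Fin n → ℕ) :
    IsPF n π ↔ (∀ i, 1 ≤ π i) ∧ ∀ s, s ≤ n → s ≤ cnt π s := by
  constructor
  · rintro ⟨hpos, σ, hmono, hle⟩
    refine ⟨hpos, fun s hs => ?_⟩
    rw [← cnt_comp_perm π σ s]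
    calc s = ((Finset.univ : Finset (Fin n)).filter fun j => j.val < s).card :=
        (card_filter_val_lt hs).symm
      _ ≤ _ := Finset.card_le_card (fun j hj => by
          simp only [Finset.mem_filter, Finset.mem_univ, true_and] at hj ⊢
          exact le_trans (hle j) (by omega))
  · rintro ⟨hpos, hcnt⟩
    refine ⟨hpos, Tuple.sort π, Tuple.monotone_sort π, fun j => ?_⟩
    by_contra hcon
    push_neg at hcon
    have hs : (j.val + 1 : ℕ) ≤ n := j.isLt
    have h1 := hcnt (j.val + 1) hs
    rw [← cnt_comp_perm π (Tuple.sort π) (j.val + 1)] at h1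
    have h2 : cnt (fun j' => π (Tuple.sort π j')) (j.val + 1) ≤ j.val := by
      calc cnt (fun j' => π (Tuple.sort π j')) (j.val + 1)
          ≤ ((Finset.univ : Finset (Fin n)).filter fun j' => j'.val < j.val).card := by
            apply Finset.card_le_card
            intro x hx
            simp only [cnt, Finset.mem_filter, Finset.mem_univ, true_and] at hx ⊢
            by_contra hxx
            push_neg at hxx
            have : π (Tuple.sort π j) ≤ π (Tuple.sort π x) :=
              Tuple.monotone_sort π (by exact_mod_cast hxx)
            omega
        _ = j.val := card_filter_val_lt (le_of_lt j.isLt)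
    omega

lemma IsPF.le_of_mem {n : ℕ} {π : Fin n → ℕ} (h : IsPF n π) (j : Fin n) : π j ≤ n := by
  obtain ⟨hpos, σ, hmono, hle⟩ := h
  have := hle (σ.symm j)
  simp at this
  omega

lemma sum_range_add_one (n : ℕ) : ∑ i ∈ Finset.range n, (i + 1) = Nat.choose (n+1) 2 := by
  induction n with
  | zero => simp
  | succ k ih => rw [Finset.sum_range_succ, ih, Nat.choose_succ_succ (k+1) 1]; simp; omega

lemma IsPF.sum_le {n : ℕ} {π : Fin n → ℕ} (h : IsPF n π) :
    ∑ j, π j ≤ Nat.choose (n+1) 2 := by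
  obtain ⟨hpos, σ, hmono, hle⟩ := h
  have h1 : ∑ j, π j = ∑ j, π (σ j) := (Equiv.sum_comp σ π).symm
  have h2 : ∑ j : Fin n, π (σ j) ≤ ∑ j : Fin n, (j.val + 1) :=
    Finset.sum_le_sum fun j _ => hle j
  have h3 : ∑ j : Fin n, (j.val + 1) = Nat.choose (n+1) 2 := by
    rw [Fin.sum_univ_eq_sum_range (fun j => j + 1) n, sum_range_add_one]
  omega


open Classical in
noncomputable def pfs (n : ℕ) : Finset (Fin n → ℕ) :=
  (Fintype.piFinset fun _ => Finset.Icc 1 n).filter (fun π => IsPF n π)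

lemma mem_pfs {n : ℕ} {π : Fin n → ℕ} : π ∈ pfs n ↔ IsPF n π := by
  classical
  simp only [pfs, Finset.mem_filter, Fintype.mem_piFinset, Finset.mem_Icc]
  constructor
  · exact fun h => h.2
  · intro h; exact ⟨fun j => ⟨h.1 j, h.le_of_mem j⟩, h⟩

/-- index of `j` within `S`: number of smaller elements of `S`. -/
def idx {m : ℕ} (S : Finset (Fin m)) (j : Fin m) : ℕ := (S.filter (· < j)).card

def pad {i : ℕ} (α : Fin i → ℕ) (t : ℕ) : ℕ := if h : t < i then α ⟨t, h⟩ else 0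

lemma emb_mem {m i : ℕ} {S : Finset (Fin m)} (hS : S.card = i) (t : Fin i) :
    S.orderEmbOfFin hS t ∈ S := Finset.orderEmbOfFin_mem S hS t

lemma emb_surj {m i : ℕ} {S : Finset (Fin m)} (hS : S.card = i) {j : Fin m} (hj : j ∈ S) :
    ∃ t, S.orderEmbOfFin hS t = j := by
  have : j ∈ Set.range (S.orderEmbOfFin hS) := by
    rw [Finset.range_orderEmbOfFin]; exact hj
  exact this

lemma idx_emb {m i : ℕ} {S : Finset (Fin m)} (hS : S.card = i) (t : Fin i) :
    idx S (S.orderEmbOfFin hS t) = t.val := by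
  unfold idx
  have himg : S.filter (· < S.orderEmbOfFin hS t)
      = Finset.image (S.orderEmbOfFin hS) (Finset.univ.filter fun t' : Fin i => t' < t) := by
    ext j
    simp only [Finset.mem_filter, Finset.mem_image, Finset.mem_univ, true_and]
    constructor
    · rintro ⟨hjS, hlt⟩
      obtain ⟨t', rfl⟩ := emb_surj hS hjS
      exact ⟨t', (OrderEmbedding.lt_iff_lt _).mp hlt, rfl⟩
    · rintro ⟨t', hlt, rfl⟩
      exact ⟨emb_mem hS t', (OrderEmbedding.lt_iff_lt _).mpr hlt⟩
  rw [himg, Finset.card_image_of_injective _ (S.orderEmbOfFin hS).injective]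
  have : (Finset.univ.filter fun t' : Fin i => t' < t)
      = (Finset.univ.filter fun t' : Fin i => t'.val < t.val) := by
    apply Finset.filter_congr; intro x _; exact Iff.rfl
  rw [this, card_filter_val_lt (le_of_lt t.isLt)]

lemma idx_lt {m i : ℕ} {S : Finset (Fin m)} (hS : S.card = i) {j : Fin m} (hj : j ∈ S) :
    idx S j < i := by
  obtain ⟨t, rfl⟩ := emb_surj hS hj
  rw [idx_emb]; exact t.isLt

lemma emb_idx {m i : ℕ} {S : Finset (Fin m)} (hS : S.card = i) {j : Fin m} (hj : j ∈ S) :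
    S.orderEmbOfFin hS ⟨idx S j, idx_lt hS hj⟩ = j := by
  obtain ⟨t, rfl⟩ := emb_surj hS hj
  congr 1
  exact Fin.ext (idx_emb hS t)

lemma pad_idx_emb {m i : ℕ} {S : Finset (Fin m)} (hS : S.card = i) (α : Fin i → ℕ) (t : Fin i) :
    pad α (idx S (S.orderEmbOfFin hS t)) = α t := by
  rw [idx_emb]
  simp [pad, t.isLt]

/-- master reindexing lemma -/
lemma sum_emb {m i : ℕ} {S : Finset (Fin m)} (hS : S.card = i) {M : Type*} [AddCommMonoid M]
    (f : Fin m → M) :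
    ∑ j ∈ S, f j = ∑ t : Fin i, f (S.orderEmbOfFin hS t) := by
  refine (Finset.sum_bij (fun (t : Fin i) _ => S.orderEmbOfFin hS t) ?_ ?_ ?_ ?_).symm
  · intro t _; exact emb_mem hS t
  · intro a _ b _ h; exact (S.orderEmbOfFin hS).injective h
  · intro j hj; obtain ⟨t, ht⟩ := emb_surj hS hj; exact ⟨t, Finset.mem_univ t, ht⟩
  · intro t _; rfl



noncomputable def glue (m i : ℕ) (S : Finset (Fin m)) (k : ℕ) (α : Fin i → ℕ)
    (β : Fin (m - i) → ℕ) : Fin (m+1) → ℕ :=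
  fun j => Fin.lastCases (i + 1 - k)
    (fun j' => if j' ∈ S then pad α (idx S j') else pad β (idx Sᶜ j') + (i+1)) j

lemma glue_last (m i S k α β) : glue m i S k α β (Fin.last m) = i + 1 - k := by
  simp [glue]

lemma glue_castSucc (m i S k α β) (j : Fin m) :
    glue m i S k α β j.castSucc
      = if j ∈ S then pad α (idx S j) else pad β (idx Sᶜ j) + (i+1) := by
  simp [glue]

lemma card_compl_eq {m i : ℕ} {S : Finset (Fin m)} (hS : S.card = i) :
    Sᶜ.card = m - i := by
  rw [Finset.card_compl, hS]; simp

lemma glue_sum_m {m i : ℕ} (S : Finset (Fin m)) (k : ℕ) (α : Fin i → ℕ) (β : Fin (m-i) → ℕ)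
    (hS : S.card = i) {M : Type*} [AddCommMonoid M] (f : ℕ → M) :
    ∑ j : Fin m, f (glue m i S k α β j.castSucc)
      = (∑ t, f (α t)) + ∑ t, f (β t + (i+1)) := by
  rw [← Finset.sum_add_sum_compl S]
  congr 1
  · rw [sum_emb hS]
    apply Finset.sum_congr rfl
    intro t _
    rw [glue_castSucc, if_pos (Finset.orderEmbOfFin_mem S hS t), pad_idx_emb hS]
  · rw [sum_emb (card_compl_eq hS)]
    apply Finset.sum_congr rfl
    intro t _
    rw [glue_castSucc,
      if_neg (Finset.mem_compl.mp (Finset.orderEmbOfFin_mem _ (card_compl_eq hS) t)),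
      pad_idx_emb (card_compl_eq hS)]

lemma glue_sum {m i : ℕ} (S : Finset (Fin m)) (k : ℕ) (α : Fin i → ℕ) (β : Fin (m-i) → ℕ)
    (hS : S.card = i) {M : Type*} [AddCommMonoid M] (f : ℕ → M) :
    ∑ j : Fin (m+1), f (glue m i S k α β j)
      = f (i + 1 - k) + ((∑ t, f (α t)) + ∑ t, f (β t + (i+1))) := by
  rw [Fin.sum_univ_castSucc, glue_sum_m S k α β hS, glue_last, add_comm]

lemma glue_sum_val {m i : ℕ} (S : Finset (Fin m)) (k : ℕ) (α : Fin i → ℕ) (β : Fin (m-i) → ℕ)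
    (hS : S.card = i) :
    ∑ j, glue m i S k α β j
      = (i + 1 - k) + ((∑ t, α t) + ((∑ t, β t) + (m-i) * (i+1))) := by
  rw [glue_sum S k α β hS (fun x => x)]
  congr 2
  rw [Finset.sum_add_distrib, Finset.sum_const, Finset.card_univ]
  simp [mul_comm]

lemma cnt_castSucc_glue {m i : ℕ} (S : Finset (Fin m)) (k : ℕ) (α : Fin i → ℕ)
    (β : Fin (m-i) → ℕ) (hS : S.card = i) (hβ : ∀ t, 1 ≤ β t) (s : ℕ) :
    cnt (fun j : Fin m => glue m i S k α β j.castSucc) s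
      = cnt α s + cnt β (s - (i+1)) := by
  simp only [cnt, Finset.card_filter]
  rw [glue_sum_m S k α β hS (fun x => if x ≤ s then 1 else 0)]
  congr 1
  apply Finset.sum_congr rfl
  intro t _
  have := hβ t
  congr 1
  simp only [eq_iff_iff]
  omega

lemma cnt_glue {m i : ℕ} (S : Finset (Fin m)) (k : ℕ) (α : Fin i → ℕ)
    (β : Fin (m-i) → ℕ) (hS : S.card = i) (hβ : ∀ t, 1 ≤ β t) (s : ℕ) :
    cnt (glue m i S k α β) s
      = (if i + 1 - k ≤ s then 1 else 0) + (cnt α s + cnt β (s - (i+1))) := by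
  have h := cnt_castSucc_glue S k α β hS hβ s
  simp only [cnt, Finset.card_filter] at h ⊢
  rw [Fin.sum_univ_castSucc, glue_last, add_comm]
  simpa using h

lemma cnt_eq_card_of_all_le {n : ℕ} {π : Fin n → ℕ} {s : ℕ} (h : ∀ j, π j ≤ s) :
    cnt π s = n := by
  unfold cnt
  rw [Finset.filter_true_of_mem (fun j _ => h j)]
  simp

lemma cnt_zero_of_pos {n : ℕ} {π : Fin n → ℕ} (h : ∀ j, 1 ≤ π j) {s : ℕ} (hs : s = 0) :
    cnt π s = 0 := by
  unfold cnt
  rw [Finset.card_eq_zero, Finset.filter_eq_empty_iff]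
  intro j _
  have := h j
  omega

lemma cnt_mono' {n : ℕ} (π : Fin n → ℕ) {s t : ℕ} (h : s ≤ t) : cnt π s ≤ cnt π t := by
  apply Finset.card_le_card
  intro j hj
  simp only [Finset.mem_filter, Finset.mem_univ, true_and] at hj ⊢
  omega

lemma two_mul_choose (n : ℕ) : 2 * Nat.choose (n+1) 2 = n * (n+1) := by
  induction n with
  | zero => simp
  | succ k ih =>
    rw [Nat.choose_succ_succ (k+1) 1, Nat.mul_add, ih, Nat.choose_one_right]
    ring

lemma choose_split (i d : ℕ) :
    Nat.choose (i+d+2) 2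
      = Nat.choose (i+1) 2 + Nat.choose (d+1) 2 + (i+1)*d + (i+1) := by
  apply Nat.eq_of_mul_eq_mul_left (show 0 < 2 by norm_num)
  rw [Nat.mul_add, Nat.mul_add, Nat.mul_add, two_mul_choose, two_mul_choose,
    show i + d + 2 = (i + d + 1) + 1 by ring, two_mul_choose]
  ring

lemma glue_isPF {m i : ℕ} (S : Finset (Fin m)) (k : ℕ) (α : Fin i → ℕ)
    (β : Fin (m-i) → ℕ) (hi : i ≤ m) (hS : S.card = i) (hk : k ≤ i)
    (hα : IsPF i α) (hβ : IsPF (m-i) β) : IsPF (m+1) (glue m i S k α β) := by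
  have hαle := hα.le_of_mem
  rw [isPF_iff] at hα hβ ⊢
  obtain ⟨hαpos, hαcnt⟩ := hα
  obtain ⟨hβpos, hβcnt⟩ := hβ
  constructor
  · intro j
    induction j using Fin.lastCases with
    | last => rw [glue_last]; omega
    | cast j =>
      rw [glue_castSucc]
      split
      · next hj => have := hαpos ⟨idx S j, idx_lt hS hj⟩; simpa [pad, idx_lt hS hj]
      · omega
  · intro s hs
    rw [cnt_glue S k α β hS hβpos s]
    rcases le_or_gt s i with h | h
    · have := hαcnt s h
      omega
    · have h1 : (if i + 1 - k ≤ s then 1 else 0) = 1 := by rw [if_pos]; omega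
      have h2 : i ≤ cnt α s := by
        calc i = cnt α i := (cnt_eq_card_of_all_le fun t => hαle t).symm
          _ ≤ cnt α s := cnt_mono' α (le_of_lt h)
      have h3 : s - (i+1) ≤ cnt β (s - (i+1)) := hβcnt _ (by omega)
      omega

lemma glue_cosum {m i : ℕ} (S : Finset (Fin m)) (k : ℕ) (α : Fin i → ℕ)
    (β : Fin (m-i) → ℕ) (hi : i ≤ m) (hS : S.card = i) (hk : k ≤ i)
    (hα : IsPF i α) (hβ : IsPF (m-i) β) :
    cosum (m+1) (glue m i S k α β) = k + cosum i α + cosum (m-i) β := by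
  have hsum := glue_sum_val S k α β hS
  have hα2 := hα.sum_le
  have hβ2 := hβ.sum_le
  have hcs : Nat.choose (m+1+1) 2
      = Nat.choose (i+1) 2 + Nat.choose ((m-i)+1) 2 + (i+1)*(m-i) + (i+1) := by
    have := choose_split i (m-i)
    rwa [show i + (m-i) + 2 = m + 1 + 1 by omega] at this
  unfold cosum
  rw [mul_comm (i+1) (m-i)] at hcs
  omega
lemma cnt_split_last {m : ℕ} (π : Fin (m+1) → ℕ) (s : ℕ) :
    cnt π s = cnt (fun j : Fin m => π j.castSucc) s
      + (if π (Fin.last m) ≤ s then 1 else 0) := by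
  simp only [cnt, Finset.card_filter]
  rw [Fin.sum_univ_castSucc]

lemma glue_gcnt_ge {m i : ℕ} (S : Finset (Fin m)) (k : ℕ) (α : Fin i → ℕ)
    (β : Fin (m-i) → ℕ) (hS : S.card = i) (hα : IsPF i α) (hβ : IsPF (m-i) β)
    {s : ℕ} (hs : s ≤ i) :
    s ≤ cnt (fun j : Fin m => glue m i S k α β j.castSucc) s := by
  rw [cnt_castSucc_glue S k α β hS hβ.1 s]
  have := ((isPF_iff α).mp hα).2 s hs
  omega

lemma glue_gcnt_eq {m i : ℕ} (S : Finset (Fin m)) (k : ℕ) (α : Fin i → ℕ)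
    (β : Fin (m-i) → ℕ) (hS : S.card = i) (hα : IsPF i α) (hβ : IsPF (m-i) β) :
    cnt (fun j : Fin m => glue m i S k α β j.castSucc) (i+1) = i := by
  rw [cnt_castSucc_glue S k α β hS hβ.1 (i+1)]
  have h1 : cnt α (i+1) = i := cnt_eq_card_of_all_le fun t => le_trans (hα.le_of_mem t) (by omega)
  have h2 : cnt β ((i+1) - (i+1)) = 0 := cnt_zero_of_pos hβ.1 (by omega)
  omega

lemma glue_recover_S {m i : ℕ} (S : Finset (Fin m)) (k : ℕ) (α : Fin i → ℕ)
    (β : Fin (m-i) → ℕ) (hS : S.card = i) (hα : IsPF i α) :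
    Finset.univ.filter (fun j => glue m i S k α β j.castSucc ≤ i) = S := by
  ext j
  simp only [Finset.mem_filter, Finset.mem_univ, true_and]
  rw [glue_castSucc]
  constructor
  · intro h
    by_contra hj
    rw [if_neg hj] at h
    omega
  · intro hj
    rw [if_pos hj]
    have := hα.le_of_mem ⟨idx S j, idx_lt hS hj⟩
    simpa [pad, idx_lt hS hj]

lemma glue_recover_α {m i : ℕ} (S : Finset (Fin m)) (k : ℕ) (α : Fin i → ℕ)
    (β : Fin (m-i) → ℕ) (hS : S.card = i) (t : Fin i) :
    glue m i S k α β ((S.orderEmbOfFin hS) t).castSucc = α t := by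
  rw [glue_castSucc, if_pos (emb_mem hS t), pad_idx_emb hS]

lemma glue_recover_β {m i : ℕ} (S : Finset (Fin m)) (k : ℕ) (α : Fin i → ℕ)
    (β : Fin (m-i) → ℕ) (hS : S.card = i) (t : Fin (m-i)) :
    glue m i S k α β ((Sᶜ.orderEmbOfFin (card_compl_eq hS)) t).castSucc = β t + (i+1) := by
  rw [glue_castSucc,
    if_neg (Finset.mem_compl.mp (emb_mem (card_compl_eq hS) t)),
    pad_idx_emb (card_compl_eq hS)]

lemma glue_inj {m i i' : ℕ} {S : Finset (Fin m)} {S' : Finset (Fin m)} {k k' : ℕ}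
    {α : Fin i → ℕ} {α' : Fin i' → ℕ} {β : Fin (m-i) → ℕ} {β' : Fin (m-i') → ℕ}
    (hS : S.card = i) (hk : k ≤ i) (hα : IsPF i α) (hβ : IsPF (m-i) β)
    (hS' : S'.card = i') (hk' : k' ≤ i') (hα' : IsPF i' α') (hβ' : IsPF (m-i') β')
    (h : glue m i S k α β = glue m i' S' k' α' β') :
    i = i' ∧ S = S' ∧ k = k' ∧ HEq α α' ∧ HEq β β' := by
  have hii : i = i' := by
    by_contra hne
    rcases Nat.lt_or_ge i i' with hlt | hge
    · have h1 := glue_gcnt_eq S k α β hS hα hβ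
      have h2 := glue_gcnt_ge S' k' α' β' hS' hα' hβ' (s := i+1) (by omega)
      rw [h] at h1
      omega
    · have h1 := glue_gcnt_eq S' k' α' β' hS' hα' hβ'
      have h2 := glue_gcnt_ge S k α β hS hα hβ (s := i'+1) (by omega)
      rw [← h] at h1
      omega
  subst hii
  have hSS : S = S' := by
    rw [← glue_recover_S S k α β hS hα, ← glue_recover_S S' k' α' β' hS' hα', h]
  subst hSS
  have hkk : k = k' := by
    have h1 : glue m i S k α β (Fin.last m) = i + 1 - k := glue_last ..
    have h2 : glue m i S k' α' β' (Fin.last m) = i + 1 - k' := glue_last ..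
    rw [h] at h1
    omega
  subst hkk
  have hαα : α = α' := by
    funext t
    rw [← glue_recover_α S k α β hS t, ← glue_recover_α S k α' β' hS t, h]
  subst hαα
  have hββ : β = β' := by
    funext t
    have h1 := glue_recover_β S k α β hS t
    have h2 := glue_recover_β S k α β' hS t
    rw [h] at h1
    rw [h1] at h2
    omega
  exact ⟨rfl, rfl, rfl, HEq.rfl, heq_of_eq hββ⟩

lemma glue_surj {m : ℕ} {π : Fin (m+1) → ℕ} (hπ : IsPF (m+1) π) :
    ∃ (i : ℕ) (S : Finset (Fin m)) (k : ℕ) (α : Fin i → ℕ) (β : Fin (m-i) → ℕ),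
      i ≤ m ∧ S.card = i ∧ k ≤ i ∧ IsPF i α ∧ IsPF (m-i) β ∧
        glue m i S k α β = π := by
  classical
  obtain ⟨hpos, hcntfull⟩ := (isPF_iff π).mp hπ
  have hle := hπ.le_of_mem
  set v := π (Fin.last m) with hv
  set g : ℕ → ℕ := fun s => cnt (fun j : Fin m => π j.castSucc) s with hg
  have hcnt' : ∀ s, s ≤ m + 1 → s ≤ g s + (if v ≤ s then 1 else 0) := by
    intro s hs
    have := hcntfull s hs
    rw [cnt_split_last π s] at this
    exact this
  have hgle : ∀ s, g s ≤ m := fun s => by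
    simpa [hg, cnt] using Finset.card_filter_le (Finset.univ : Finset (Fin m)) _
  have hgmono : ∀ {s t : ℕ}, s ≤ t → g s ≤ g t := fun h => cnt_mono' _ h
  have hex : ∃ s, v ≤ s + 1 ∧ g (s+1) ≤ s := by
    refine ⟨m, ?_, hgle (m+1)⟩
    have := hle (Fin.last m)
    omega
  obtain ⟨i, hi, ⟨hvi, hgi1⟩, hmin⟩ :
      ∃ i, i ≤ m ∧ (v ≤ i + 1 ∧ g (i+1) ≤ i) ∧ ∀ s, s < i → ¬ (v ≤ s + 1 ∧ g (s+1) ≤ s) :=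
    ⟨Nat.find hex, Nat.find_le ⟨by have := hle (Fin.last m); omega, hgle (m+1)⟩,
      Nat.find_spec hex, fun s hs => Nat.find_min hex hs⟩
  -- p2 : counts below i are large
  have p2 : ∀ s, s ≤ i → s ≤ g s := by
    intro s hs
    rcases Nat.eq_zero_or_pos s with rfl | hs0
    · exact Nat.zero_le _
    obtain ⟨s', rfl⟩ : ∃ s', s = s' + 1 := ⟨s - 1, by omega⟩
    have hns := hmin s' (by omega)
    have hc := hcnt' (s'+1) (by omega)
    rcases le_or_gt v (s'+1) with hvs | hvs
    · rw [if_pos hvs] at hc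
      by_contra hcon
      exact hns ⟨hvs, by omega⟩
    · rw [if_neg (by omega)] at hc
      omega
  -- p1 : g (i+1) = i
  have p1 : g (i+1) = i := by
    have hc := hcnt' (i+1) (by omega)
    rw [if_pos hvi] at hc
    omega
  have pgi : g i = i := by
    have h1 := p2 i le_rfl
    have h2 : g i ≤ g (i+1) := hgmono (by omega)
    omega
  set S : Finset (Fin m) := Finset.univ.filter (fun j => π j.castSucc ≤ i) with hSdef
  have hS : S.card = i := pgi
  -- values off S are at least i+2
  have p4 : ∀ j : Fin m, j ∉ S → i + 2 ≤ π j.castSucc := by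
    intro j hj
    simp only [hSdef, Finset.mem_filter, Finset.mem_univ, true_and, not_le] at hj
    by_contra hcon
    have hji : π j.castSucc = i + 1 := by omega
    have hsub : insert j S ⊆ Finset.univ.filter (fun j' => π j'.castSucc ≤ i + 1) := by
      intro x hx
      rcases Finset.mem_insert.mp hx with rfl | hx
      · simp [hji]
      · simp only [hSdef, Finset.mem_filter, Finset.mem_univ, true_and] at hx ⊢
        omega
    have hcard : (insert j S).card = i + 1 := by
      rw [Finset.card_insert_of_notMem (by simp [hSdef]; omega), hS]
    have := Finset.card_le_card hsub
    rw [hcard] at this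
    have : i + 1 ≤ g (i+1) := this
    omega
  set α : Fin i → ℕ := fun t => π ((S.orderEmbOfFin hS) t).castSucc with hαdef
  have hSc : Sᶜ.card = m - i := card_compl_eq hS
  set β : Fin (m-i) → ℕ := fun t => π ((Sᶜ.orderEmbOfFin hSc) t).castSucc - (i+1) with hβdef
  -- cnt of α equals restricted count
  have hcntα : ∀ s, cnt α s = (S.filter (fun j => π j.castSucc ≤ s)).card := by
    intro s
    simp only [cnt, Finset.card_filter]
    rw [sum_emb hS (f := fun j => if π j.castSucc ≤ s then 1 else 0)]
  have hα : IsPF i α := by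
    rw [isPF_iff]
    constructor
    · intro t; exact hpos _
    · intro s hs
      rw [hcntα s]
      have : S.filter (fun j => π j.castSucc ≤ s) = Finset.univ.filter (fun j => π j.castSucc ≤ s) := by
        ext j
        simp only [hSdef, Finset.mem_filter, Finset.mem_univ, true_and]
        constructor
        · rintro ⟨_, h2⟩; exact h2
        · intro h2; exact ⟨by omega, h2⟩
      rw [this]
      exact p2 s hs
  have hβpos : ∀ t, 1 ≤ β t := by
    intro t
    have := p4 _ (Finset.mem_compl.mp (emb_mem hSc t))
    simp only [hβdef]
    omega
  have hβ : IsPF (m-i) β := by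
    rw [isPF_iff]
    refine ⟨hβpos, ?_⟩
    intro s hs
    have hcntβ : cnt β s = (Sᶜ.filter (fun j => π j.castSucc ≤ s + (i+1))).card := by
      simp only [cnt, Finset.card_filter]
      rw [sum_emb hSc (f := fun j => if π j.castSucc ≤ s + (i+1) then 1 else 0)]
      apply Finset.sum_congr rfl
      intro t _
      have := p4 _ (Finset.mem_compl.mp (emb_mem hSc t))
      simp only [hβdef]
      congr 1
      simp only [eq_iff_iff]
      omega
    have hsplit : (Finset.univ.filter (fun j : Fin m => π j.castSucc ≤ s + (i+1))).card
        = (S.filter (fun j => π j.castSucc ≤ s + (i+1))).card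
          + (Sᶜ.filter (fun j => π j.castSucc ≤ s + (i+1))).card := by
      rw [Finset.card_filter, Finset.card_filter, Finset.card_filter,
        ← Finset.sum_add_sum_compl S]
    have hfullS : S.filter (fun j => π j.castSucc ≤ s + (i+1)) = S := by
      apply Finset.filter_true_of_mem
      intro j hj
      simp only [hSdef, Finset.mem_filter, Finset.mem_univ, true_and] at hj
      omega
    have hgbig : s + i ≤ g (s + (i+1)) := by
      have := hcnt' (s + (i+1)) (by omega)
      rcases le_or_gt v (s + (i+1)) with hvs | hvs
      · rw [if_pos hvs] at this; omega
      · rw [if_neg (by omega)] at this; omega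
    have : g (s + (i+1)) = (Finset.univ.filter (fun j : Fin m => π j.castSucc ≤ s + (i+1))).card := rfl
    rw [hcntβ]
    rw [hfullS, hS] at hsplit
    omega
  refine ⟨i, S, i + 1 - v, α, β, hi, hS, by have h1 : 1 ≤ v := hpos _; omega, hα, hβ, ?_⟩
  funext j
  induction j using Fin.lastCases with
  | last =>
    rw [glue_last]
    have : 1 ≤ v := hpos _
    omega
  | cast j =>
    rw [glue_castSucc]
    by_cases hj : j ∈ S
    · rw [if_pos hj]
      have hidx := idx_lt hS hj
      have : pad α (idx S j) = α ⟨idx S j, hidx⟩ := by simp [pad, hidx]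
      rw [this, hαdef]
      simp only []
      rw [emb_idx hS hj]
    · rw [if_neg hj]
      have hj' : j ∈ Sᶜ := Finset.mem_compl.mpr hj
      have hidx := idx_lt hSc hj'
      have : pad β (idx Sᶜ j) = β ⟨idx Sᶜ j, hidx⟩ := by simp [pad, hidx]
      rw [this, hβdef]
      simp only []
      rw [emb_idx hSc hj']
      have := p4 j hj
      omega

lemma pfCosumEnum_eq (n : ℕ) : pfCosumEnum n = ∑ π ∈ pfs n, X ^ cosum n π := by
  rw [pfCosumEnum, ← finsum_mem_coe_finset]
  congr 1
  ext π
  simp [mem_pfs]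

lemma pfCosumEnum_zero : pfCosumEnum 0 = 1 := by
  rw [pfCosumEnum_eq]
  have h0 : pfs 0 = {fun j : Fin 0 => 1} := by
    ext π
    simp only [mem_pfs, Finset.mem_singleton]
    constructor
    · intro _; funext j; exact j.elim0
    · intro h
      refine ⟨fun i => i.elim0, Equiv.refl _, ?_, fun j => j.elim0⟩
      intro a; exact a.elim0
  rw [h0, Finset.sum_singleton]
  simp [cosum]


/-- Kreweras' recurrence for the parking function cosum enumerator. -/
theorem pfCosumEnum_recurrence :
    pfCosumEnum 0 = 1 ∧
    ∀ n : ℕ, 1 ≤ n →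
      pfCosumEnum n = ∑ i ∈ Finset.range n,
        (Nat.choose (n-1) i : Polynomial ℤ) * (∑ k ∈ Finset.range (i+1), X ^ k) *
          pfCosumEnum i * pfCosumEnum (n-1-i) := by
  refine ⟨pfCosumEnum_zero, ?_⟩
  intro n hn
  obtain ⟨m, rfl⟩ : ∃ m, n = m + 1 := ⟨n - 1, by omega⟩
  simp only [Nat.add_sub_cancel]
  have hterm : ∀ i ∈ Finset.range (m+1),
      (Nat.choose m i : Polynomial ℤ) * (∑ k ∈ Finset.range (i+1), X ^ k) *
        pfCosumEnum i * pfCosumEnum (m-i)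
      = ∑ S ∈ Finset.powersetCard i (Finset.univ : Finset (Fin m)),
          ∑ k ∈ Finset.range (i+1), ∑ α ∈ pfs i, ∑ β ∈ pfs (m-i),
            X ^ (k + cosum i α + cosum (m-i) β) := by
    intro i _
    rw [pfCosumEnum_eq, pfCosumEnum_eq]
    have hin : ∀ S ∈ Finset.powersetCard i (Finset.univ : Finset (Fin m)),
        (∑ k ∈ Finset.range (i+1), ∑ α ∈ pfs i, ∑ β ∈ pfs (m-i),
          (X : Polynomial ℤ) ^ (k + cosum i α + cosum (m-i) β))
        = (∑ k ∈ Finset.range (i+1), (X : Polynomial ℤ) ^ k) *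
            (∑ α ∈ pfs i, (X : Polynomial ℤ) ^ cosum i α) *
            (∑ β ∈ pfs (m-i), (X : Polynomial ℤ) ^ cosum (m-i) β) := by
      intro S _
      simp only [Finset.sum_mul_sum, Finset.sum_mul, Finset.mul_sum, pow_add]
      conv_rhs => rw [Finset.sum_comm]
      conv_rhs => enter [2, α]; rw [Finset.sum_comm]
      conv_rhs => rw [Finset.sum_comm]
    rw [Finset.sum_congr rfl hin, Finset.sum_const, Finset.card_powersetCard,
      Finset.card_univ, Fintype.card_fin, nsmul_eq_mul]
    ring
  have hbij : ∑ x ∈ (Finset.range (m+1)).sigma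
        (fun i => Finset.powersetCard i (Finset.univ : Finset (Fin m)) ×ˢ
          Finset.range (i+1) ×ˢ pfs i ×ˢ pfs (m-i)),
        (X : Polynomial ℤ) ^ (x.2.2.1 + cosum x.1 x.2.2.2.1 + cosum (m - x.1) x.2.2.2.2)
      = ∑ π ∈ pfs (m+1), (X : Polynomial ℤ) ^ cosum (m+1) π := by
    refine Finset.sum_bij
      (fun x _ => glue m x.1 x.2.1 x.2.2.1 x.2.2.2.1 x.2.2.2.2) ?_ ?_ ?_ ?_
    · rintro ⟨i, S, k, α, β⟩ hx
      simp only [Finset.mem_sigma, Finset.mem_product, Finset.mem_range,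
        Finset.mem_powersetCard_univ, mem_pfs] at hx
      obtain ⟨hi, hS, hk, hα, hβ⟩ := hx
      exact mem_pfs.mpr (glue_isPF S k α β (by omega) hS (by omega) hα hβ)
    · rintro ⟨i, S, k, α, β⟩ hx ⟨i', S', k', α', β'⟩ hx' heq
      dsimp only at hx hx' heq
      simp only [Finset.mem_sigma, Finset.mem_product, Finset.mem_range,
        Finset.mem_powersetCard_univ, mem_pfs] at hx hx'
      obtain ⟨hi, hS, hk, hα, hβ⟩ := hx
      obtain ⟨hi', hS', hk', hα', hβ'⟩ := hx'
      obtain ⟨h1, h2, h3, h4, h5⟩ :=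
        glue_inj hS (by omega) hα hβ hS' (by omega) hα' hβ' heq
      subst h1
      simp only [Sigma.mk.inj_iff, heq_eq_eq, Prod.mk.injEq]
      exact ⟨trivial, h2, h3, eq_of_heq h4, eq_of_heq h5⟩
    · intro π hπ
      obtain ⟨i, S, k, α, β, hi, hS, hk, hα, hβ, hglue⟩ := glue_surj (mem_pfs.mp hπ)
      refine ⟨⟨i, S, k, α, β⟩, ?_, hglue⟩
      simp only [Finset.mem_sigma, Finset.mem_product, Finset.mem_range,
        Finset.mem_powersetCard_univ, mem_pfs]
      exact ⟨by omega, hS, by omega, hα, hβ⟩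
    · rintro ⟨i, S, k, α, β⟩ hx
      simp only [Finset.mem_sigma, Finset.mem_product, Finset.mem_range,
        Finset.mem_powersetCard_univ, mem_pfs] at hx
      obtain ⟨hi, hS, hk, hα, hβ⟩ := hx
      rw [glue_cosum S k α β (by omega) hS (by omega) hα hβ]
  rw [Finset.sum_congr rfl hterm, pfCosumEnum_eq, ← hbij, Finset.sum_sigma]
  apply Finset.sum_congr rfl
  intro i _
  rw [Finset.sum_product]
  apply Finset.sum_congr rfl
  intro S _
  rw [Finset.sum_product]
  apply Finset.sum_congr rfl
  intro k _
  rw [Finset.sum_product]
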